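/- Let C be a finite set of complex numbers. If g₁ and g₂ are polyexponential functions (on the non-negative integers) with bases C, then their convolution g₁ * g₂ is again a polyexponential function with bases C. Moreover, the maximal degree of the polynomial coefficients of g₁ * g₂ is at most one plus the sum of the maximal degrees of the polynomial coefficients of g₁ and of g₂. -/

import Mathlib

open Polynomial Finset


/-- The convolution of two functions on the non-negative integers:
`(g₁ * g₂)(k) = Σ_{j=0}^{k} g₁(j) g₂(k−j)`. -/
noncomputable def conv (g₁ g₂ : ℕ → ℂ) (k : ℕ) : ℂ :=
  ∑ j ∈ Finset.range (k + 1), g₁ j * g₂ (k - j)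

/-- `g` is polyexponential with bases `C` whose polynomial coefficients all
have degree at most `D`. -/
def IsPolyexpOfDeg (C : Finset ℂ) (D : ℕ) (g : ℕ → ℂ) : Prop :=
  ∃ p : ℂ → Polynomial ℂ, (∀ c ∈ C, (p c).natDegree ≤ D) ∧
    ∀ k : ℕ, g k = ∑ c ∈ C, (p c).eval (k : ℂ) * c ^ k


/-- Degree drop of `r - r.comp (X - 1)`. -/
lemma aux_N_deg (r : ℂ[X]) (hN : r - r.comp (X - C 1) ≠ 0) :
    (r - r.comp (X - C 1)).natDegree < r.natDegree := by
  have hr : r ≠ 0 := by rintro rfl; simp at hN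
  have h1 : (X - C (1:ℂ)).natDegree = 1 := natDegree_X_sub_C 1
  have hcompdeg : (r.comp (X - C 1)).natDegree = r.natDegree := by
    rw [natDegree_comp, h1, mul_one]
  have hlc : (r.comp (X - C 1)).leadingCoeff = r.leadingCoeff := by
    rw [leadingCoeff_comp (by rw [h1]; norm_num)]
    have : (X - C (1:ℂ)).leadingCoeff = 1 := (monic_X_sub_C (1:ℂ)).leadingCoeff
    rw [this, one_pow, mul_one]
  have hcomp0 : r.comp (X - C 1) ≠ 0 := by
    intro h
    apply hr
    rw [← leadingCoeff_eq_zero, ← hlc, h, leadingCoeff_zero]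
  have hdeg : r.degree = (r.comp (X - C 1)).degree := by
    rw [degree_eq_natDegree hr, degree_eq_natDegree hcomp0, hcompdeg]
  have hlt := degree_sub_lt hdeg hr hlc.symm
  apply natDegree_lt_natDegree hN hlt

/-- coeff and degree facts about `E = X^(n+1) - (X - 1)^(n+1)`. -/
lemma aux_E (n : ℕ) :
    (X ^ (n+1) - (X - C (1:ℂ)) ^ (n+1)).natDegree = n ∧
    (X ^ (n+1) - (X - C (1:ℂ)) ^ (n+1)).leadingCoeff = (n+1 : ℂ) := by
  set E : ℂ[X] := X ^ (n+1) - (X - C 1) ^ (n+1) with hE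
  have hn1 : ((n:ℂ) + 1) ≠ 0 := Nat.cast_add_one_ne_zero n
  have hcoeff : E.coeff n = (n+1 : ℂ) := by
    have h1 : ((X : ℂ[X]) ^ (n+1)).coeff n = 0 := by
      rw [coeff_X_pow]; simp [Nat.ne_of_lt (Nat.lt_succ_self n)]
    have h2 : (((X : ℂ[X]) - C 1) ^ (n+1)).coeff n = -(n+1 : ℂ) := by
      have h : ((X : ℂ[X]) - C 1) = X + C (-1) := by rw [map_neg, sub_eq_add_neg]
      rw [h, coeff_X_add_C_pow]
      simp [Nat.succ_sub (le_refl n)]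
    rw [hE, coeff_sub, h1, h2]; ring
  have hdeglt : E.degree < ((n+1 : ℕ) : WithBot ℕ) := by
    have hm : (((X : ℂ[X]) - C 1) ^ (n+1)).Monic := (monic_X_sub_C (1:ℂ)).pow _
    have hd : (((X : ℂ[X]) - C 1) ^ (n+1)).degree = ((n+1 : ℕ) : WithBot ℕ) := by
      rw [degree_pow, degree_X_sub_C]; simp
    have := degree_sub_lt (p := (X:ℂ[X]) ^ (n+1)) (q := (X - C 1) ^ (n+1))
      (by rw [degree_X_pow, hd])
      (pow_ne_zero _ X_ne_zero)
      (by rw [leadingCoeff_X_pow, hm.leadingCoeff])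
    rw [degree_X_pow] at this
    exact this
  have hE0 : E ≠ 0 := fun h => hn1 (by rw [h, coeff_zero] at hcoeff; exact hcoeff.symm)
  have hdle : E.natDegree ≤ n := by
    have := (natDegree_lt_iff_degree_lt hE0).mpr hdeglt
    omega
  have hdge : n ≤ E.natDegree := le_natDegree_of_ne_zero (by rw [hcoeff]; exact hn1)
  have hdeg : E.natDegree = n := le_antisymm hdle hdge
  exact ⟨hdeg, by rw [leadingCoeff, hdeg, hcoeff]⟩

lemma key_solve (t : ℂ) (r : ℂ[X]) :
    ∃ A : ℂ[X], A.natDegree ≤ r.natDegree + 1 ∧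
      C t * A - A.comp (X - C 1) = C t * r := by
  obtain ⟨n, hn⟩ : ∃ n, r.natDegree ≤ n := ⟨r.natDegree, le_rfl⟩
  induction n using Nat.strong_induction_on generalizing r with
  | _ n ih =>
  by_cases hr0 : r = 0
  · exact ⟨0, by simp [hr0]⟩
  by_cases ht : t = 1
  · -- t = 1
    subst ht
    simp only [map_one, one_mul] at ih ⊢
    set m := r.natDegree with hm
    set a := r.leadingCoeff with ha
    have ha0 : a ≠ 0 := leadingCoeff_ne_zero.mpr hr0
    have hm1 : ((m:ℂ) + 1) ≠ 0 := Nat.cast_add_one_ne_zero m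
    set E : ℂ[X] := X ^ (m+1) - (X - C 1) ^ (m+1) with hEdef
    obtain ⟨hEdeg, hElc⟩ := aux_E m
    set A₀ : ℂ[X] := C (a / (m+1)) * X ^ (m+1) with hA0
    set D₀ : ℂ[X] := C (a / (m+1)) * E with hD0
    have hΦA₀ : A₀ - A₀.comp (X - C 1) = D₀ := by
      rw [hA0, mul_comp, C_comp, X_pow_comp, hD0, hEdef]
      ring
    have hc0 : a / ((m:ℂ)+1) ≠ 0 := div_ne_zero ha0 hm1
    have hD0lc : D₀.leadingCoeff = a := by
      rw [hD0, leadingCoeff_mul, leadingCoeff_C, hElc]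
      field_simp
    have hD0deg : D₀.natDegree = m := by rw [hD0, natDegree_C_mul hc0, hEdeg]
    have hD00 : D₀ ≠ 0 := fun h => ha0 (by rw [h, leadingCoeff_zero] at hD0lc; exact hD0lc.symm)
    have hA₀deg : A₀.natDegree ≤ m + 1 := by
      calc (C (a / ((m:ℂ)+1)) * X ^ (m+1)).natDegree ≤ _ + _ := natDegree_mul_le
      _ ≤ m + 1 := by simp [natDegree_C, natDegree_X_pow]
    by_cases hres : r - D₀ = 0
    · refine ⟨A₀, hA₀deg, ?_⟩
      simp only [C_1] at hΦA₀
      rw [hΦA₀, (sub_eq_zero.mp hres).symm]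
    · have hdegres : (r - D₀).natDegree < m := by
        have hdeq : r.degree = D₀.degree := by
          rw [degree_eq_natDegree hr0, degree_eq_natDegree hD00, hD0deg]
        exact natDegree_lt_natDegree hres (degree_sub_lt hdeq hr0 hD0lc.symm)
      obtain ⟨A₁, hA₁deg, hA₁⟩ := ih (r - D₀).natDegree (lt_of_lt_of_le hdegres hn) (r - D₀) le_rfl
      refine ⟨A₀ + A₁, ?_, ?_⟩
      · exact (natDegree_add_le _ _).trans (max_le hA₀deg (hA₁deg.trans (by omega)))
      · rw [add_comp]
        simp only [C_1] at hΦA₀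
        calc A₀ + A₁ - (A₀.comp (X - 1) + A₁.comp (X - 1))
            = (A₀ - A₀.comp (X - 1)) + (A₁ - A₁.comp (X - 1)) := by ring
          _ = D₀ + (r - D₀) := by rw [hΦA₀, hA₁]
          _ = r := by ring
  · -- t ≠ 1
    have ht1 : t - 1 ≠ 0 := sub_ne_zero.mpr ht
    set Nr : ℂ[X] := r - r.comp (X - C 1) with hNr
    have hΦ : ∀ B : ℂ[X], C t * (C (t/(t-1)) * B) - (C (t/(t-1)) * B).comp (X - C 1)
        = C (t/(t-1)) * (C t * B - B.comp (X - C 1)) := by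
      intro B
      rw [mul_comp, C_comp]; ring
    have hkey : C t * r - r.comp (X - C 1) = C (t-1) * r + Nr := by
      rw [hNr, map_sub, C_1]; ring
    have hC2 : C (t/(t-1)) * C (t-1) = C t := by
      rw [← C_mul, div_mul_cancel₀ _ ht1]
    by_cases hN0 : Nr = 0
    · refine ⟨C (t/(t-1)) * r, (natDegree_C_mul_le _ _).trans (by omega), ?_⟩
      rw [hΦ, hkey, hN0, add_zero, ← mul_assoc, hC2]
    · have hdegN : Nr.natDegree < r.natDegree := aux_N_deg r hN0
      obtain ⟨A₁, hA₁deg, hA₁⟩ := ih Nr.natDegree (lt_of_lt_of_le hdegN hn)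
        (C (-(t-1)⁻¹) * Nr) ((natDegree_C_mul_le _ _).trans le_rfl)
      refine ⟨C (t/(t-1)) * r + A₁, ?_, ?_⟩
      · apply (natDegree_add_le _ _).trans
        apply max_le ((natDegree_C_mul_le _ _).trans (by omega))
        exact hA₁deg.trans (by have := (natDegree_C_mul_le (-(t-1)⁻¹) Nr); omega)
      · rw [add_comp]
        have e1 : C t * (C (t/(t-1)) * r + A₁) - ((C (t/(t-1)) * r).comp (X - C 1) + A₁.comp (X - C 1))
            = (C t * (C (t/(t-1)) * r) - (C (t/(t-1)) * r).comp (X - C 1)) + (C t * A₁ - A₁.comp (X - C 1)) := by ring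
        rw [e1, hΦ, hkey, hA₁]
        have hC3 : C (t/(t-1)) + C t * C (-(t-1)⁻¹) = 0 := by
          rw [← C_mul, ← C_add, ← C_0]
          congr 1
          field_simp
          ring
        linear_combination r * hC2 + Nr * hC3

lemma sum_eval_pow (t : ℂ) (r : ℂ[X]) :
    ∃ A : ℂ[X], A.natDegree ≤ r.natDegree + 1 ∧ ∀ k : ℕ,
      ∑ j ∈ range (k+1), r.eval (j:ℂ) * t^j
        = A.eval (k:ℂ) * t^k + (r.eval 0 - A.eval 0) := by
  obtain ⟨A, hdeg, hA⟩ := key_solve t r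
  have heval : ∀ x : ℂ, t * A.eval x - A.eval (x - 1) = t * r.eval x := by
    intro x
    have := congrArg (Polynomial.eval x) hA
    simpa [eval_comp] using this
  refine ⟨A, hdeg, fun k => ?_⟩
  induction k with
  | zero => simp
  | succ k ihk =>
    rw [Finset.sum_range_succ, ihk]
    have h := heval ((k:ℂ) + 1)
    rw [show ((k:ℂ) + 1 - 1) = (k:ℂ) by ring] at h
    push_cast
    calc A.eval (k:ℂ) * t^k + (r.eval 0 - A.eval 0) + r.eval ((k:ℂ)+1) * t^(k+1)
        = (A.eval (k:ℂ) + t * r.eval ((k:ℂ)+1)) * t^k + (r.eval 0 - A.eval 0) := by ring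
      _ = A.eval ((k:ℂ)+1) * t^(k+1) + (r.eval 0 - A.eval 0) := by
          have h3 : A.eval (k:ℂ) + t * r.eval ((k:ℂ)+1) = t * A.eval ((k:ℂ)+1) := by
            linear_combination -h
          rw [h3]; ring

lemma pair_decomp (c c' : ℂ) (p q : ℂ[X]) :
    ∃ A B : ℂ[X], A.natDegree ≤ p.natDegree + q.natDegree + 1 ∧
      B.natDegree ≤ p.natDegree + q.natDegree + 1 ∧
      ∀ k : ℕ, ∑ j ∈ range (k+1),
          (p.eval (j:ℂ) * c^j) * (q.eval ((k-j : ℕ):ℂ) * c'^(k-j))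
        = A.eval (k:ℂ) * c^k + B.eval (k:ℂ) * c'^k := by
  by_cases hc' : c' = 0
  · -- c' = 0 : only the j = k term survives
    subst hc'
    refine ⟨C (q.eval 0) * p, 0, ?_, ?_, ?_⟩
    · exact (natDegree_C_mul_le _ _).trans (by omega)
    · simp
    · intro k
      rw [Finset.sum_eq_single_of_mem k (self_mem_range_succ k)]
      · simp [mul_comm, mul_assoc, mul_left_comm]
      · intro j hj hjk
        have hjle : j ≤ k := Nat.lt_succ_iff.mp (mem_range.mp hj)
        have : k - j ≠ 0 := by omega
        rw [zero_pow this]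
        ring
  · -- c' ≠ 0
    set t : ℂ := c / c' with hts
    choose A' hdeg' heq' using fun e : ℕ => sum_eval_pow t (X ^ e * p)
    set β : ℕ → ℂ := fun e => (X ^ e * p).eval 0 - (A' e).eval 0 with hβ
    set N := q.natDegree with hN
    set w : ℕ → ℕ → ℂ := fun i m => q.coeff i * (i.choose m : ℂ) * (-1 : ℂ)^(i-m) with hw
    refine ⟨∑ i ∈ range (N+1), ∑ m ∈ range (i+1), C (w i m) * (X ^ m * A' (i-m)),
            ∑ i ∈ range (N+1), ∑ m ∈ range (i+1), C (w i m * β (i-m)) * X ^ m,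
            ?_, ?_, ?_⟩
    · apply natDegree_sum_le_of_forall_le
      intro i hi
      apply natDegree_sum_le_of_forall_le
      intro m hm
      have h1 : (C (w i m) * (X ^ m * A' (i-m))).natDegree
          ≤ 0 + (m + (A' (i-m)).natDegree) :=
        natDegree_mul_le.trans (by
          gcongr
          · exact natDegree_C _ |>.le
          · exact natDegree_mul_le.trans (by rw [natDegree_X_pow]))
      have h2 := hdeg' (i-m)
      have h3 : (X ^ (i-m) * p).natDegree ≤ (i-m) + p.natDegree :=
        natDegree_mul_le.trans (by rw [natDegree_X_pow])
      have him : i ≤ N := Nat.lt_succ_iff.mp (mem_range.mp hi)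
      have hmi : m ≤ i := Nat.lt_succ_iff.mp (mem_range.mp hm)
      omega
    · apply natDegree_sum_le_of_forall_le
      intro i hi
      apply natDegree_sum_le_of_forall_le
      intro m hm
      have h1 : (C (w i m * β (i-m)) * X ^ m).natDegree ≤ 0 + m :=
        natDegree_mul_le.trans (by
          gcongr
          · exact natDegree_C _ |>.le
          · exact (natDegree_X_pow m).le)
      have him : i ≤ N := Nat.lt_succ_iff.mp (mem_range.mp hi)
      have hmi : m ≤ i := Nat.lt_succ_iff.mp (mem_range.mp hm)
      omega
    · intro k
      have hck : t^k * c'^k = c^k := by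
        rw [hts, div_pow, div_mul_cancel₀ _ (pow_ne_zero _ hc')]
      trans (∑ j ∈ range (k+1), ∑ i ∈ range (N+1), ∑ m ∈ range (i+1),
              (w i m * (k:ℂ)^m * c'^k) * ((X ^ (i-m) * p).eval (j:ℂ) * t^j))
      · refine sum_congr rfl fun j hj => ?_
        have hjk : j ≤ k := Nat.lt_succ_iff.mp (mem_range.mp hj)
        have h1 : ((k-j : ℕ):ℂ) = (k:ℂ) - j := by
          push_cast [Nat.cast_sub hjk]; ring
        have h2 : c'^(k-j) * c'^j = c'^k := by
          rw [← pow_add]; congr 1; omega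
        have h3 : c^j = t^j * c'^j := by
          rw [hts, div_pow, div_mul_cancel₀ _ (pow_ne_zero _ hc')]
        rw [h1, eval_eq_sum_range (p := q), ← hN]
        simp only [sub_eq_add_neg, add_pow, eval_mul, eval_pow, eval_X]
        simp only [Finset.mul_sum, Finset.sum_mul]
        refine sum_congr rfl fun i hi => sum_congr rfl fun m hm => ?_
        simp only [hw]
        linear_combination
          (p.eval (j:ℂ) * q.coeff i * (i.choose m : ℂ) * (-(j:ℂ))^(i-m) * (k:ℂ)^m
            * c'^(k-j)) * h3
          + (p.eval (j:ℂ) * q.coeff i * (i.choose m : ℂ) * (-(j:ℂ))^(i-m) * (k:ℂ)^m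
            * t^j) * h2
          + (p.eval (j:ℂ) * q.coeff i * (i.choose m : ℂ) * (k:ℂ)^m * t^j * c'^k)
            * (neg_pow (j:ℂ) (i-m))
      trans (∑ i ∈ range (N+1), ∑ m ∈ range (i+1),
              (w i m * (k:ℂ)^m * c'^k) * ((A' (i-m)).eval (k:ℂ) * t^k + β (i-m)))
      · rw [Finset.sum_comm]
        refine sum_congr rfl fun i hi => ?_
        rw [Finset.sum_comm]
        refine sum_congr rfl fun m hm => ?_
        rw [← Finset.mul_sum, heq' (i-m) k]
      · simp only [eval_finset_sum, eval_mul, eval_C, eval_pow, eval_X, Finset.sum_mul]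
        rw [← Finset.sum_add_distrib]
        refine sum_congr rfl fun i hi => ?_
        rw [← Finset.sum_add_distrib]
        refine sum_congr rfl fun m hm => ?_
        linear_combination (w i m * (k:ℂ)^m * (A' (i-m)).eval (k:ℂ)) * hck

/-- The convolution of two polyexponential functions with bases `C` is again
polyexponential with bases `C`, and the maximal degree of the polynomial
coefficients of the convolution is at most one plus the sum of the maximal
degrees of the polynomial coefficients of the two factors. -/
theorem conv_polyexponential (C : Finset ℂ) (g₁ g₂ : ℕ → ℂ) (D₁ D₂ : ℕ)
    (h₁ : IsPolyexpOfDeg C D₁ g₁) (h₂ : IsPolyexpOfDeg C D₂ g₂) :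
    IsPolyexpOfDeg C (D₁ + D₂ + 1) (conv g₁ g₂) := by
  obtain ⟨p, hp, hg1⟩ := h₁
  obtain ⟨q, hq, hg2⟩ := h₂
  choose A B hAdeg hBdeg hAB using fun c c' : ℂ => pair_decomp c c' (p c) (q c')
  refine ⟨fun c => (∑ c' ∈ C, A c c') + (∑ c' ∈ C, B c' c), ?_, ?_⟩
  · intro c hc
    apply (natDegree_add_le _ _).trans
    apply max_le
    · exact natDegree_sum_le_of_forall_le _ _ fun c' hc' =>
        (hAdeg c c').trans (by have := hp c hc; have := hq c' hc'; omega)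
    · exact natDegree_sum_le_of_forall_le _ _ fun c' hc' =>
        (hBdeg c' c).trans (by have := hp c' hc'; have := hq c hc; omega)
  · intro k
    calc conv g₁ g₂ k
        = ∑ j ∈ range (k+1), (∑ c ∈ C, (p c).eval (j:ℂ) * c^j)
            * (∑ c' ∈ C, (q c').eval ((k-j:ℕ):ℂ) * c'^(k-j)) := by
          refine sum_congr rfl fun j hj => ?_
          rw [← hg1 j, ← hg2 (k-j)]
      _ = ∑ j ∈ range (k+1), ∑ c ∈ C, ∑ c' ∈ C,
            ((p c).eval (j:ℂ) * c^j) * ((q c').eval ((k-j:ℕ):ℂ) * c'^(k-j)) := by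
          exact sum_congr rfl fun j hj => by rw [Finset.sum_mul_sum]
      _ = ∑ c ∈ C, ∑ j ∈ range (k+1), ∑ c' ∈ C,
            ((p c).eval (j:ℂ) * c^j) * ((q c').eval ((k-j:ℕ):ℂ) * c'^(k-j)) := Finset.sum_comm
      _ = ∑ c ∈ C, ∑ c' ∈ C, ∑ j ∈ range (k+1),
            ((p c).eval (j:ℂ) * c^j) * ((q c').eval ((k-j:ℕ):ℂ) * c'^(k-j)) := by
          exact sum_congr rfl fun c hc => Finset.sum_comm
      _ = ∑ c ∈ C, ∑ c' ∈ C, ((A c c').eval (k:ℂ) * c^k + (B c c').eval (k:ℂ) * c'^k) := by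
          exact sum_congr rfl fun c hc => sum_congr rfl fun c' hc' => hAB c c' k
      _ = ∑ c ∈ C, ((∑ c' ∈ C, A c c').eval (k:ℂ) * c^k + (∑ c' ∈ C, B c' c).eval (k:ℂ) * c^k) := by
          simp only [Finset.sum_add_distrib, eval_finset_sum, Finset.sum_mul]
          congr 1
          rw [Finset.sum_comm]
      _ = ∑ c ∈ C, ((fun c => (∑ c' ∈ C, A c c') + (∑ c' ∈ C, B c' c)) c).eval (k:ℂ) * c^k := by
          refine sum_congr rfl fun c hc => ?_
          simp only [eval_add]
          ring
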